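/- arXiv:1505.06263 — 3 statements merged into one kernel-verified Lean document; each statement's English description precedes it below -/
import Mathlib

section
/- Let C be a linear code of length n over R, let i ∈ {1,…,5}, and let x ∈ Rⁿ be such that uⁱ·x ∈ C and the coordinatewise reduction x̄ of x modulo the maximal ideal (u) (a vector in F₂ⁿ) is nonzero. Then there exist two distinct codewords c₁, c₂ ∈ C with d_c(c₁, c₂) ≤ w_H(x̄), the Hamming weight of x̄. (In other words, the minimum edit distance of C is at most the minimum Hamming distance of each torsion code Tor_i(C), the image of (C : uⁱ) = {x ∈ Rⁿ : uⁱx ∈ C} under reduction mod u.) -/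
open Polynomial

/-- The ring `R = F₂[u]/(u⁶)`. -/
abbrev R : Type := AdjoinRoot (X ^ 6 : (ZMod 2)[X])

noncomputable instance : DecidableEq R := Classical.decEq _

/-- `u ∈ R`, the image of `X`. -/
noncomputable def u : R := AdjoinRoot.root _

/-- Cost structure for the Levenshtein distance (formerly in Mathlib). -/
structure Levenshtein.Cost (α β δ : Type*) where
  delete : α → δ
  insert : β → δ
  substitute : α → β → δ

/-- The default cost: every deletion, insertion and substitution costs 1. -/
def Levenshtein.defaultCost {α : Type*} [DecidableEq α] : Levenshtein.Cost α α ℕ where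
  delete _ := 1
  insert _ := 1
  substitute a b := if a = b then 0 else 1

/-- Auxiliary step of the Levenshtein dynamic program (formerly in Mathlib). -/
def Levenshtein.impl {α β δ : Type*} [AddZeroClass δ] [Min δ]
    (C : Levenshtein.Cost α β δ) (xs : List α) (y : β)
    (d : {r : List δ // 0 < r.length}) : {r : List δ // 0 < r.length} :=
  let ⟨ds, w⟩ := d
  xs.zip (ds.zip ds.tail) |>.foldr
    (init := ⟨[C.insert y + ds.getLast (List.length_pos_iff.mp w)], by simp⟩)
    (fun ⟨x, d₀, d₁⟩ ⟨r, w⟩ =>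
      ⟨min (C.delete x + r[0]) (min (C.insert y + d₀) (C.substitute x y + d₁)) :: r, by simp⟩)

/-- Levenshtein distances of all suffixes of `xs` to `ys` (formerly in Mathlib). -/
def suffixLevenshtein {α β δ : Type*} [AddZeroClass δ] [Min δ]
    (C : Levenshtein.Cost α β δ) (xs : List α) (ys : List β) :
    {r : List δ // 0 < r.length} :=
  ys.foldr
    (Levenshtein.impl C xs)
    (xs.foldr (init := ⟨[0], by simp⟩) (fun a ⟨r, w⟩ => ⟨(C.delete a + r[0]) :: r, by simp⟩))

/-- The Levenshtein (edit) distance with cost `C` (formerly in Mathlib). -/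
def levenshtein {α β δ : Type*} [AddZeroClass δ] [Min δ]
    (C : Levenshtein.Cost α β δ) (xs : List α) (ys : List β) : δ :=
  let ⟨r, w⟩ := suffixLevenshtein C xs ys
  r[0]


@[simp] theorem levenshtein_nil_nil {α β δ : Type*} [AddZeroClass δ] [Min δ]
    (C : Levenshtein.Cost α β δ) : levenshtein C ([] : List α) ([] : List β) = 0 := rfl

theorem Levenshtein.impl_length {α β δ : Type*} [AddZeroClass δ] [Min δ]
    (C : Levenshtein.Cost α β δ) (xs : List α) (y : β) (d : {r : List δ // 0 < r.length})
    (w : d.1.length = xs.length + 1) :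
    (Levenshtein.impl C xs y d).1.length = xs.length + 1 := by
  induction xs generalizing d with
  | nil => rfl
  | cons x xs ih =>
    dsimp [Levenshtein.impl]
    match d, w with
    | ⟨d₁ :: d₂ :: ds, _⟩, w =>
      dsimp
      congr 1
      exact ih ⟨d₂ :: ds, (by simp)⟩ (by simpa using w)

theorem suffixLevenshtein_length {α β δ : Type*} [AddZeroClass δ] [Min δ]
    (C : Levenshtein.Cost α β δ) (xs : List α) (ys : List β) :
    (suffixLevenshtein C xs ys).1.length = xs.length + 1 := by
  induction ys with
  | nil =>
    dsimp [suffixLevenshtein]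
    induction xs with
    | nil => rfl
    | cons _ xs ih =>
      simp_all
  | cons y ys ih =>
    dsimp [suffixLevenshtein]
    rw [Levenshtein.impl_length]
    exact ih

theorem suffixLevenshtein_cons₁_aux {α : Type*} {x y : {r : List α // 0 < r.length}}
    (w₀ : x.1[0]'x.2 = y.1[0]'y.2) (w : x.1.tail = y.1.tail) : x = y := by
  match x, y with
  | ⟨hx :: tx, _⟩, ⟨hy :: ty, _⟩ => simp_all

theorem suffixLevenshtein_cons₂ {α β δ : Type*} [AddZeroClass δ] [Min δ]
    (C : Levenshtein.Cost α β δ) (xs : List α) (y : β) (ys : List β) :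
    suffixLevenshtein C xs (y :: ys) = (Levenshtein.impl C xs) y (suffixLevenshtein C xs ys) :=
  rfl

theorem Levenshtein.impl_cons {α β δ : Type*} [AddZeroClass δ] [Min δ]
    (C : Levenshtein.Cost α β δ) (x : α) (xs : List α) (y : β) (d : δ) (ds : List δ) (w)
    (w' : 0 < List.length ds) :
    Levenshtein.impl C (x :: xs) y ⟨d :: ds, w⟩ =
      let ⟨r, w⟩ := Levenshtein.impl C xs y ⟨ds, w'⟩
      ⟨min (C.delete x + r[0]) (min (C.insert y + d) (C.substitute x y + ds[0])) :: r,
        by simp⟩ :=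
  match ds, w' with | _ :: _, _ => rfl

theorem Levenshtein.impl_cons_fst_zero {α β δ : Type*} [AddZeroClass δ] [Min δ]
    (C : Levenshtein.Cost α β δ) (x : α) (xs : List α) (y : β) (d : δ) (ds : List δ) (w)
    (h) (w' : 0 < List.length ds) :
    (Levenshtein.impl C (x :: xs) y ⟨d :: ds, w⟩).1[0]'h =
      let ⟨r, w⟩ := Levenshtein.impl C xs y ⟨ds, w'⟩
      min (C.delete x + r[0]) (min (C.insert y + d) (C.substitute x y + ds[0])) :=
  match ds, w' with | _ :: _, _ => rfl

theorem suffixLevenshtein_cons₁ {α β δ : Type*} [AddZeroClass δ] [Min δ]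
    (C : Levenshtein.Cost α β δ) (x : α) (xs : List α) (ys : List β) :
    suffixLevenshtein C (x :: xs) ys =
      ⟨levenshtein C (x :: xs) ys ::
        (suffixLevenshtein C xs ys).1, by simp⟩ := by
  induction ys with
  | nil =>
    rfl
  | cons y ys ih =>
    apply suffixLevenshtein_cons₁_aux
    · rfl
    · rw [suffixLevenshtein_cons₂ C (x :: xs), ih, Levenshtein.impl_cons]
      · rfl
      · simp [suffixLevenshtein_length]

theorem suffixLevenshtein_cons_cons_fst_get_zero {α β δ : Type*} [AddZeroClass δ] [Min δ]
    (C : Levenshtein.Cost α β δ) (x : α) (xs : List α) (y : β) (ys : List β) (w) :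
    (suffixLevenshtein C (x :: xs) (y :: ys)).1[0]'w =
      min
        (C.delete x + (suffixLevenshtein C xs (y :: ys)).1[0]'(by simp [suffixLevenshtein_length]))
        (min
          (C.insert y + (suffixLevenshtein C (x :: xs) ys).1[0]'(by simp [suffixLevenshtein_length]))
          (C.substitute x y + (suffixLevenshtein C xs ys).1[0]'(by simp [suffixLevenshtein_length]))) := by
  conv =>
    lhs
    dsimp only [suffixLevenshtein_cons₂]
  simp only [suffixLevenshtein_cons₁]
  rw [Levenshtein.impl_cons_fst_zero]
  rfl

theorem levenshtein_cons_cons {α β δ : Type*} [AddZeroClass δ] [Min δ]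
    (C : Levenshtein.Cost α β δ) (x : α) (xs : List α) (y : β) (ys : List β) :
    levenshtein C (x :: xs) (y :: ys) =
      min (C.delete x + levenshtein C xs (y :: ys))
        (min (C.insert y + levenshtein C (x :: xs) ys)
          (C.substitute x y + levenshtein C xs ys)) :=
  suffixLevenshtein_cons_cons_fst_get_zero ..

lemma lev_le_card {α : Type} [DecidableEq α] :
    ∀ (n : ℕ) (f g : Fin n → α),
      levenshtein Levenshtein.defaultCost (List.ofFn f) (List.ofFn g)
        ≤ (Finset.univ.filter (fun j => f j ≠ g j)).card := by
  intro n
  induction n with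
  | zero => intro f g; simp
  | succ n ih =>
    intro f g
    rw [List.ofFn_succ, List.ofFn_succ, levenshtein_cons_cons]
    refine le_trans (le_trans (min_le_right _ _) (min_le_right _ _)) ?_
    · have h := ih (fun j => f j.succ) (fun j => g j.succ)
      rw [Finset.card_filter, Fin.sum_univ_succ]
      rw [Finset.card_filter] at h
      have hsub : Levenshtein.defaultCost.substitute (f 0) (g 0)
          ≤ (if f 0 ≠ g 0 then 1 else 0) := by
        by_cases hfg : f 0 = g 0 <;> simp [hfg, Levenshtein.defaultCost]
      exact Nat.add_le_add hsub h

lemma u_pow_six : u ^ 6 = 0 := by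
  have : (u : R) ^ 6 = AdjoinRoot.mk (X ^ 6 : (ZMod 2)[X]) (X ^ 6) := by
    rw [map_pow]; rfl
  rw [this, AdjoinRoot.mk_self]

lemma u5_mul_ne_zero (a : R) (ha : a ∉ Ideal.span ({u} : Set R)) : u ^ 5 * a ≠ 0 := by
  obtain ⟨p, rfl⟩ := AdjoinRoot.mk_surjective a
  intro h0
  have : AdjoinRoot.mk (X ^ 6 : (ZMod 2)[X]) (X ^ 5 * p) = 0 := by
    rw [map_mul, map_pow]; exact h0
  rw [AdjoinRoot.mk_eq_zero] at this
  have hX : (X : (ZMod 2)[X]) ∣ p := by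
    have h6 : (X : (ZMod 2)[X]) ^ 6 = X ^ 5 * X := by ring
    rw [h6] at this
    exact (mul_dvd_mul_iff_left (pow_ne_zero 5 (X_ne_zero))).mp this
  obtain ⟨q, rfl⟩ := hX
  apply ha
  rw [Ideal.mem_span_singleton]
  exact ⟨AdjoinRoot.mk _ q, by rw [map_mul]; rfl⟩

lemma u5_mul_eq_zero (a : R) (ha : a ∈ Ideal.span ({u} : Set R)) : u ^ 5 * a = 0 := by
  rw [Ideal.mem_span_singleton] at ha
  obtain ⟨b, rfl⟩ := ha
  rw [← mul_assoc, ← pow_succ, u_pow_six, zero_mul]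

/-- if `C` is a linear code of length `n` over `R`, `1 ≤ i ≤ 5`, and `x ∈ Rⁿ`
satisfies `uⁱ • x ∈ C` with the reduction of `x` modulo the maximal ideal `(u)` nonzero,
then there are two distinct codewords at edit distance at most the Hamming weight of that
reduction. -/
theorem edit_distance_le_torsion_weight (n : ℕ) (hn : 0 < n)
    (C : Submodule R (Fin n → R)) (i : ℕ) (hi1 : 1 ≤ i) (hi5 : i ≤ 5)
    (x : Fin n → R) (hx : u ^ i • x ∈ C)
    (hxbar : ∃ j : Fin n, x j ∉ Ideal.span ({u} : Set R)) :
    ∃ c₁ ∈ C, ∃ c₂ ∈ C, c₁ ≠ c₂ ∧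
      levenshtein Levenshtein.defaultCost (List.ofFn c₁) (List.ofFn c₂)
        ≤ Nat.card {j : Fin n // x j ∉ Ideal.span ({u} : Set R)} := by
  classical
  obtain ⟨j₀, hj₀⟩ := hxbar
  refine ⟨u ^ 5 • x, ?_, 0, C.zero_mem, ?_, ?_⟩
  · have : u ^ 5 • x = u ^ (5 - i) • (u ^ i • x) := by
      rw [smul_smul, ← pow_add, Nat.sub_add_cancel hi5]
    rw [this]
    exact C.smul_mem _ hx
  · intro h
    have : (u ^ 5 • x) j₀ = 0 := by rw [h]; rfl
    exact u5_mul_ne_zero (x j₀) hj₀ this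
  · refine le_trans (lev_le_card n _ _) ?_
    rw [Nat.card_eq_fintype_card, Fintype.card_subtype]
    apply Finset.card_le_card
    intro j hj
    rw [Finset.mem_filter] at hj ⊢
    refine ⟨Finset.mem_univ _, fun hmem => hj.2 ?_⟩
    show (u ^ 5 • x) j = (0 : Fin n → R) j
    simpa using u5_mul_eq_zero _ hmem
end

section
/- Let n be odd, let f₀, f₁, f₂, f₃, f₄, f₅ be monic polynomials in F₂[x] with f₅|f₄|f₃|f₂|f₁|f₀|(xⁿ−1), and let C be the cyclic code of length n over R given by the ideal of R[x]/(xⁿ−1) generated by f₀, uf₁, u²f₂, u³f₃, u⁴f₄, u⁵f₅ (coefficients embedded via F₂ ↪ R). If the codeword α(1+x+⋯+x^{n−1}) belongs to C and every f_i is self-reciprocal, then C is a reverse-complement code. -/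
open Polynomial

/-- `α = u⁵ + u⁴ + u³ + u² + u + 1`, so that the complement of `x ∈ R` is `x + α`. -/
noncomputable def alpha : R := u ^ 5 + u ^ 4 + u ^ 3 + u ^ 2 + u + 1

/-- Reverse-complement of a vector: `(c₀, …, c_{n-1}) ↦ (ĉ_{n-1}, …, ĉ₀)` with `x̂ = x + α`. -/
noncomputable def rcomp {n : ℕ} (c : Fin n → R) : Fin n → R := fun j => c j.rev + alpha

/-- Lift a binary polynomial to a polynomial over `R` via `F₂ ↪ R`. -/
noncomputable def rmap (f : (ZMod 2)[X]) : R[X] := f.map (algebraMap (ZMod 2) R)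

/-- The quotient map `R[x] → R[x]/(xⁿ - 1)`. -/
noncomputable def mkq (n : ℕ) : R[X] →+* R[X] ⧸ Ideal.span ({(X : R[X]) ^ n - 1} : Set R[X]) :=
  Ideal.Quotient.mk _

/-- The cyclic code of length `n` over `R` given (as a set of coefficient vectors) by the
ideal of `R[x]/(xⁿ - 1)` generated by `f₀, u f₁, u² f₂, u³ f₃, u⁴ f₄, u⁵ f₅`. -/
noncomputable def cyclicCode (n : ℕ) (f₀ f₁ f₂ f₃ f₄ f₅ : (ZMod 2)[X]) :
    Set (Fin n → R) :=
  {c | mkq n (∑ i : Fin n, Polynomial.C (c i) * X ^ (i : ℕ)) ∈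
    Ideal.span ({mkq n (rmap f₀), mkq n (Polynomial.C u * rmap f₁),
      mkq n (Polynomial.C (u ^ 2) * rmap f₂), mkq n (Polynomial.C (u ^ 3) * rmap f₃),
      mkq n (Polynomial.C (u ^ 4) * rmap f₄), mkq n (Polynomial.C (u ^ 5) * rmap f₅)} :
        Set (R[X] ⧸ Ideal.span ({(X : R[X]) ^ n - 1} : Set R[X])))}


instance : Nontrivial R :=
  AdjoinRoot.nontrivial _ (by rw [Polynomial.degree_X_pow]; exact (by decide))

set_option maxHeartbeats 1000000

/-- for `n` odd and monic `f₅|f₄|f₃|f₂|f₁|f₀|(xⁿ-1)` in `F₂[x]`, if the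
codeword `α(1 + x + ⋯ + x^{n-1})` belongs to the cyclic code
`⟨f₀, uf₁, u²f₂, u³f₃, u⁴f₄, u⁵f₅⟩` and every `fᵢ` is self-reciprocal, then the code is
reverse-complement. -/
theorem reverseComplement_of_selfReciprocal (n : ℕ) (hodd : Odd n)
    (f₀ f₁ f₂ f₃ f₄ f₅ : (ZMod 2)[X])
    (hm₀ : f₀.Monic) (hm₁ : f₁.Monic) (hm₂ : f₂.Monic) (hm₃ : f₃.Monic)
    (hm₄ : f₄.Monic) (hm₅ : f₅.Monic)
    (h54 : f₅ ∣ f₄) (h43 : f₄ ∣ f₃) (h32 : f₃ ∣ f₂) (h21 : f₂ ∣ f₁) (h10 : f₁ ∣ f₀)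
    (h0 : f₀ ∣ X ^ n - 1)
    (halpha : (fun _ : Fin n => alpha) ∈ cyclicCode n f₀ f₁ f₂ f₃ f₄ f₅)
    (hs₀ : f₀.reverse = f₀) (hs₁ : f₁.reverse = f₁) (hs₂ : f₂.reverse = f₂)
    (hs₃ : f₃.reverse = f₃) (hs₄ : f₄.reverse = f₄) (hs₅ : f₅.reverse = f₅) :
    ∀ c ∈ cyclicCode n f₀ f₁ f₂ f₃ f₄ f₅, rcomp c ∈ cyclicCode n f₀ f₁ f₂ f₃ f₄ f₅ := by
  intro c hc
  have hn : 1 ≤ n := hodd.pos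
  set I : Ideal (R[X] ⧸ Ideal.span ({(X : R[X]) ^ n - 1} : Set R[X])) :=
    Ideal.span ({mkq n (rmap f₀), mkq n (Polynomial.C u * rmap f₁),
      mkq n (Polynomial.C (u ^ 2) * rmap f₂), mkq n (Polynomial.C (u ^ 3) * rmap f₃),
      mkq n (Polynomial.C (u ^ 4) * rmap f₄), mkq n (Polynomial.C (u ^ 5) * rmap f₅)} :
        Set (R[X] ⧸ Ideal.span ({(X : R[X]) ^ n - 1} : Set R[X]))) with hI
  set t := mkq n X with ht'
  have ht : t ^ n = 1 := by
    have h1 : mkq n ((X : R[X]) ^ n - 1) = 0 :=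
      Ideal.Quotient.eq_zero_iff_mem.2 (Ideal.subset_span rfl)
    have h2 : mkq n ((X : R[X]) ^ n) - mkq n 1 = 0 := by
      rw [← map_sub]; exact h1
    have := sub_eq_zero.mp h2
    simpa [map_pow] using this
  set s := t ^ (n - 1) with hs'
  have hts : t * s = 1 := by
    rw [hs', ← pow_succ']
    have : n - 1 + 1 = n := by omega
    rw [this, ht]
  have hst : s * t = 1 := by rw [mul_comm]; exact hts
  -- the substitution x ↦ x^(n-1)
  set i : R →+* R[X] ⧸ Ideal.span ({(X : R[X]) ^ n - 1} : Set R[X]) :=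
    (mkq n).comp (Polynomial.C : R →+* R[X]) with hi
  set φ : R[X] →+* R[X] ⧸ Ideal.span ({(X : R[X]) ^ n - 1} : Set R[X]) :=
    eval₂RingHom i s with hφ
  have hφX : φ X = s := eval₂_X _ _
  have hφC : ∀ a : R, φ (Polynomial.C a) = mkq n (Polynomial.C a) := fun a => eval₂_C _ _
  have hker : ∀ p ∈ Ideal.span ({(X : R[X]) ^ n - 1} : Set R[X]), φ p = 0 := by
    intro p hp
    rw [Ideal.mem_span_singleton] at hp
    obtain ⟨q, rfl⟩ := hp
    have hXn : φ ((X : R[X]) ^ n - 1) = 0 := by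
      rw [map_sub, map_pow, hφX, map_one, hs', ← pow_mul, mul_comm, pow_mul, ht, one_pow,
        sub_self]
    rw [map_mul, hXn, zero_mul]
  set σ : (R[X] ⧸ Ideal.span ({(X : R[X]) ^ n - 1} : Set R[X])) →+*
      (R[X] ⧸ Ideal.span ({(X : R[X]) ^ n - 1} : Set R[X])) :=
    Ideal.Quotient.lift _ φ hker with hσ'
  have hσ : ∀ p : R[X], σ (mkq n p) = φ p := fun p => Ideal.Quotient.lift_mk _ _ _
  -- evaluating at t is the quotient map
  have hid : ∀ p : R[X], eval₂ i t p = mkq n p := by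
    have : (eval₂RingHom i t : R[X] →+* _) = mkq n := by
      apply Polynomial.ringHom_ext
      · intro a; simp [hi]
      · simp [hi, ht']
    intro p
    have := congrArg (fun g : R[X] →+* _ => g p) this
    simpa using this
  letI invT : Invertible t := ⟨s, hst, hts⟩
  have hinv : (⅟ t : _) = s := rfl
  -- evaluating a self-reciprocal monic binary polynomial at s
  have hevals : ∀ f : (ZMod 2)[X], f.Monic → f.reverse = f →
      eval₂ i s (rmap f) * t ^ (rmap f).natDegree = mkq n (rmap f) := by
    intro f hm hrev
    have hrev' : (rmap f).reverse = rmap f := by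
      have h1 : (rmap f).natDegree = f.natDegree := hm.natDegree_map _
      have h2 : Polynomial.reflect f.natDegree f = f := hrev
      show Polynomial.reflect (rmap f).natDegree (rmap f) = rmap f
      rw [h1, rmap, reflect_map, h2]
    calc eval₂ i s (rmap f) * t ^ (rmap f).natDegree
        = eval₂ i (⅟ t) (reverse (rmap f)) * t ^ (rmap f).natDegree := by rw [hinv, hrev']
      _ = eval₂ i t (rmap f) := eval₂_reverse_mul_pow i t (rmap f)
      _ = mkq n (rmap f) := hid _
  -- σ maps each generator into I
  have hσgen : ∀ (a : R) (f : (ZMod 2)[X]), f.Monic → f.reverse = f →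
      mkq n (Polynomial.C a * rmap f) ∈ I → σ (mkq n (Polynomial.C a * rmap f)) ∈ I := by
    intro a f hm hrev hmem
    have h1 : σ (mkq n (Polynomial.C a * rmap f)) =
        mkq n (Polynomial.C a) * eval₂ i s (rmap f) := by
      rw [hσ, map_mul, hφC]; rfl
    have h2 : σ (mkq n (Polynomial.C a * rmap f)) * t ^ (rmap f).natDegree =
        mkq n (Polynomial.C a * rmap f) := by
      rw [h1, mul_assoc, hevals f hm hrev, ← map_mul]
    have h3 : σ (mkq n (Polynomial.C a * rmap f)) =
        (σ (mkq n (Polynomial.C a * rmap f)) * t ^ (rmap f).natDegree) *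
          s ^ (rmap f).natDegree := by
      rw [mul_assoc, ← mul_pow, hts, one_pow, mul_one]
    rw [h3, h2]
    exact Ideal.mul_mem_right _ _ hmem
  -- σ maps I into I
  have hσI : ∀ x ∈ I, σ x ∈ I := by
    have hmap : Ideal.map σ I ≤ I := by
      conv_lhs => rw [hI]
      rw [Ideal.map_span, Ideal.span_le]
      rintro x ⟨y, hy, rfl⟩
      simp only [Set.mem_insert_iff, Set.mem_singleton_iff] at hy
      have g0 : mkq n (rmap f₀) ∈ I :=
        Ideal.subset_span (Set.mem_insert _ _)
      have g1 : mkq n (Polynomial.C u * rmap f₁) ∈ I :=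
        Ideal.subset_span (Set.mem_insert_of_mem _ (Set.mem_insert _ _))
      have g2 : mkq n (Polynomial.C (u^2) * rmap f₂) ∈ I :=
        Ideal.subset_span (Set.mem_insert_of_mem _ (Set.mem_insert_of_mem _
          (Set.mem_insert _ _)))
      have g3 : mkq n (Polynomial.C (u^3) * rmap f₃) ∈ I :=
        Ideal.subset_span (Set.mem_insert_of_mem _ (Set.mem_insert_of_mem _
          (Set.mem_insert_of_mem _ (Set.mem_insert _ _))))
      have g4 : mkq n (Polynomial.C (u^4) * rmap f₄) ∈ I :=
        Ideal.subset_span (Set.mem_insert_of_mem _ (Set.mem_insert_of_mem _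
          (Set.mem_insert_of_mem _ (Set.mem_insert_of_mem _ (Set.mem_insert _ _)))))
      have g5 : mkq n (Polynomial.C (u^5) * rmap f₅) ∈ I :=
        Ideal.subset_span (Set.mem_insert_of_mem _ (Set.mem_insert_of_mem _
          (Set.mem_insert_of_mem _ (Set.mem_insert_of_mem _ (Set.mem_insert_of_mem _
            rfl)))))
      rcases hy with h | h | h | h | h | h <;> subst h
      · have h1 : rmap f₀ = Polynomial.C (1 : R) * rmap f₀ := by rw [map_one, one_mul]
        have h2 := hσgen 1 f₀ hm₀ hs₀ (by rwa [h1] at g0)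
        rw [← h1] at h2
        exact h2
      · exact hσgen u f₁ hm₁ hs₁ g1
      · exact hσgen (u^2) f₂ hm₂ hs₂ g2
      · exact hσgen (u^3) f₃ hm₃ hs₃ g3
      · exact hσgen (u^4) f₄ hm₄ hs₄ g4
      · exact hσgen (u^5) f₅ hm₅ hs₅ g5
    intro x hx
    exact hmap (Ideal.mem_map_of_mem σ hx)
  -- power congruence
  have hpow : ∀ a b : ℕ, a % n = b % n → t ^ a = t ^ b := by
    have key : ∀ a : ℕ, t ^ a = t ^ (a % n) := by
      intro a
      conv_lhs => rw [← Nat.div_add_mod a n]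
      rw [pow_add, pow_mul, ht, one_pow, one_mul]
    intro a b hab
    rw [key a, key b, hab]
  -- the reversed codeword polynomial
  have hrevpoly : mkq n (∑ j : Fin n, Polynomial.C (c j.rev) * X ^ (j : ℕ)) =
      t ^ (n - 1) * σ (mkq n (∑ j : Fin n, Polynomial.C (c j) * X ^ (j : ℕ))) := by
    rw [hσ, map_sum, map_sum]
    rw [Finset.mul_sum]
    rw [← Equiv.sum_comp (Fin.revPerm : Equiv.Perm (Fin n))
      (fun j => mkq n (Polynomial.C (c j.rev) * X ^ (j : ℕ)))]
    apply Finset.sum_congr rfl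
    intro k _
    simp only [Fin.revPerm_apply, Fin.rev_rev]
    rw [map_mul, map_pow]
    have hφterm : φ (Polynomial.C (c k) * X ^ (k : ℕ)) =
        mkq n (Polynomial.C (c k)) * s ^ (k : ℕ) := by
      rw [map_mul, map_pow, hφX, hφC]
    rw [hφterm, hs', ← pow_mul]
    rw [show (mkq n) X = t from rfl]
    rw [mul_comm (t ^ (n-1)) _, mul_assoc, ← pow_add]
    congr 1
    apply hpow
    have hk : (k : ℕ) < n := k.isLt
    have hval : ((Fin.rev k : Fin n) : ℕ) = n - 1 - (k : ℕ) := by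
      rw [Fin.val_rev]; omega
    rw [hval]
    obtain ⟨m, rfl⟩ : ∃ m, n = m + 1 := ⟨n - 1, by omega⟩
    have hkm : (k : ℕ) ≤ m := by omega
    have h2 : (m + 1 - 1) * (k : ℕ) + (m + 1 - 1) = (m + 1) * (k : ℕ) + (m - (k : ℕ)) := by
      simp only [Nat.add_sub_cancel]
      rw [Nat.succ_mul]
      generalize m * (k : ℕ) = p
      omega
    rw [h2, Nat.mul_add_mod]
    have h3 : m + 1 - 1 - (k : ℕ) = m - (k : ℕ) := by omega
    rw [h3]
  -- assemble
  have hcmem : mkq n (∑ j : Fin n, Polynomial.C (c j) * X ^ (j : ℕ)) ∈ I := hc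
  have halphamem : mkq n (∑ j : Fin n, Polynomial.C alpha * X ^ (j : ℕ)) ∈ I := halpha
  have hrc : (∑ j : Fin n, Polynomial.C (rcomp c j) * X ^ (j : ℕ)) =
      (∑ j : Fin n, Polynomial.C (c j.rev) * X ^ (j : ℕ)) +
      (∑ j : Fin n, Polynomial.C alpha * X ^ (j : ℕ)) := by
    rw [← Finset.sum_add_distrib]
    apply Finset.sum_congr rfl
    intro j _
    rw [rcomp, map_add, add_mul]
  show mkq n (∑ j : Fin n, Polynomial.C (rcomp c j) * X ^ (j : ℕ)) ∈ I
  rw [hrc, map_add]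
  exact Ideal.add_mem _ (by rw [hrevpoly]; exact Ideal.mul_mem_left _ _ (hσI _ hcmem)) halphamem
end

section
/- Let m be an odd positive integer and s ≥ 0, and suppose there exists a nonnegative integer i such that 2ⁱ ≡ −1 (mod m). Then every monic divisor g of X^{m·2^s} − 1 in F₂[X] is self-reciprocal. -/
open Polynomial

private lemma pow_two_pow_eq_expand (p : (ZMod 2)[X]) (j : ℕ) :
    p ^ (2 ^ j) = Polynomial.expand (ZMod 2) (2 ^ j) p := by
  induction j with
  | zero => simp
  | succ j ih =>
    have h2 : Polynomial.expand (ZMod 2) 2 (p ^ (2 ^ j)) = (p ^ (2 ^ j)) ^ 2 := by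
      exact ZMod.expand_card (p ^ (2 ^ j))
    rw [pow_succ, pow_mul, ← h2, ih, Polynomial.expand_expand, mul_comm]

private lemma reverse_multiset_prod (t : Multiset ((ZMod 2)[X])) :
    t.prod.reverse = (t.map Polynomial.reverse).prod := by
  induction t using Multiset.induction with
  | empty => rw [Multiset.prod_zero, Multiset.map_zero, Multiset.prod_zero, ← Polynomial.C_1,
      Polynomial.reverse_C]
  | cons a t ih =>
    simp [Polynomial.reverse_mul_of_domain, ih]

private lemma irreducible_selfReciprocal (m : ℕ) (hm0 : 0 < m)
    (hpow : ∃ i : ℕ, (2 : ℤ) ^ i ≡ -1 [ZMOD (m : ℤ)])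
    (q : (ZMod 2)[X]) (hq : q.Monic) (hirr : Irreducible q)
    (hdvd : q ∣ X ^ m - 1) : q.reverse = q := by
  obtain ⟨i, hi⟩ := hpow
  have hdvdZ : (m : ℤ) ∣ (2 : ℤ) ^ i + 1 := by
    have h1 := Int.ModEq.dvd hi
    have h2 : (m : ℤ) ∣ -(-1 - 2 ^ i) := dvd_neg.mpr h1
    simpa using h2
  obtain ⟨k, hk⟩ : ∃ k : ℕ, 2 ^ i + 1 = m * k := by
    obtain ⟨c, hc⟩ := hdvdZ
    have hc0 : 0 ≤ c := by
      nlinarith [pow_pos (by norm_num : (0:ℤ) < 2) i, (by exact_mod_cast hm0 : (0:ℤ) < (m:ℤ))]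
    refine ⟨c.toNat, ?_⟩
    have : ((2 ^ i + 1 : ℕ) : ℤ) = ((m * c.toNat : ℕ) : ℤ) := by
      push_cast [Int.toNat_of_nonneg hc0]
      linarith
    exact_mod_cast this
  haveI : Fact (Irreducible q) := ⟨hirr⟩
  set K := AdjoinRoot q
  set x : K := AdjoinRoot.root q with hx
  have hxq : Polynomial.aeval x q = 0 := by
    rw [Polynomial.aeval_def, AdjoinRoot.algebraMap_eq]
    exact AdjoinRoot.eval₂_root q
  have hxm : x ^ m = 1 := by
    have h0 : Polynomial.aeval x (X ^ m - 1 : (ZMod 2)[X]) = 0 :=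
      Polynomial.aeval_eq_zero_of_dvd_aeval_eq_zero hdvd hxq
    have h1 : x ^ m - 1 = 0 := by simpa using h0
    exact sub_eq_zero.mp h1
  -- y = x ^ (2^i) is the inverse of x
  set y : K := x ^ (2 ^ i) with hy
  have hyx : y * x = 1 := by
    rw [hy, ← pow_succ, hk, pow_mul, hxm, one_pow]
  have hxy : x * y = 1 := by rw [mul_comm]; exact hyx
  haveI : Invertible y := ⟨x, hxy, hyx⟩
  have hinv : (⅟ y : K) = x := by
    exact invOf_eq_right_inv hyx
  -- q vanishes at y, by Frobenius
  have hyq : Polynomial.aeval y q = 0 := by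
    have := Polynomial.expand_aeval (2 ^ i) q x
    rw [← pow_two_pow_eq_expand] at this
    rw [hy, ← this, map_pow, hxq, zero_pow (by positivity)]
  -- hence reverse q vanishes at x = ⅟ y
  have hrev : Polynomial.aeval x q.reverse = 0 := by
    rw [← hinv, Polynomial.aeval_def]
    rw [Polynomial.eval₂_reverse_eq_zero_iff]
    rw [← Polynomial.aeval_def]; exact hyq
  -- so q divides reverse q
  have hmin : minpoly (ZMod 2) x = q := by
    rw [hx, AdjoinRoot.minpoly_root hirr.ne_zero, hq.leadingCoeff, inv_one, map_one, mul_one]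
  have hdvdrev : q ∣ q.reverse := by
    conv_lhs => rw [← hmin]
    exact minpoly.dvd (ZMod 2) x hrev
  -- q has nonzero constant coefficient
  have hc0 : q.coeff 0 ≠ 0 := by
    intro h
    have hXdvd : X ∣ q := (X_dvd_iff (f := q)).mpr h
    have : (X : (ZMod 2)[X]) ∣ X ^ m - 1 := hXdvd.trans hdvd
    have h0 : ((X : (ZMod 2)[X]) ^ m - 1).eval 0 = 0 := by
      obtain ⟨c, hc⟩ := this
      simp [hc]
    simp [zero_pow hm0.ne'] at h0
  have hc1 : q.coeff 0 = 1 := by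
    have : ∀ a : ZMod 2, a ≠ 0 → a = 1 := by decide
    exact this _ hc0
  -- reverse q is monic of the same degree
  have htr : q.natTrailingDegree = 0 := Polynomial.natTrailingDegree_eq_zero_of_constantCoeff_ne_zero hc0
  have hdegrev : q.reverse.natDegree = q.natDegree := by
    rw [Polynomial.reverse_natDegree, htr, Nat.sub_zero]
  have hmonrev : q.reverse.Monic := by
    unfold Polynomial.Monic
    rw [Polynomial.reverse_leadingCoeff, Polynomial.trailingCoeff, htr, hc1]
  -- conclude by divisibility + equal degrees + monic
  obtain ⟨c, hc⟩ := hdvdrev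
  have hq0 : q ≠ 0 := hq.ne_zero
  have hcne : c ≠ 0 := by
    intro h; rw [h, mul_zero] at hc; exact hmonrev.ne_zero hc
  have hdegc : c.natDegree = 0 := by
    have := hdegrev
    rw [hc, Polynomial.natDegree_mul hq0 hcne] at this
    omega
  have hcC : c = Polynomial.C (c.coeff 0) := (Polynomial.eq_C_of_natDegree_eq_zero hdegc)
  have hlead : c.coeff 0 = 1 := by
    have h1 : q.reverse.leadingCoeff = q.leadingCoeff * c.leadingCoeff := by
      rw [hc, Polynomial.leadingCoeff_mul]
    rw [hmonrev.leadingCoeff, hq.leadingCoeff, one_mul] at h1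
    rw [hcC] at h1 ⊢
    simpa using h1.symm
  rw [hc, hcC, hlead, map_one, mul_one]

/-- if `m` is odd, `s ≥ 0`, and `2ⁱ ≡ -1 (mod m)` for some `i`, then every
monic divisor of `X^(m·2ˢ) - 1` in `F₂[X]` is self-reciprocal. -/
theorem selfReciprocal_of_dvd_X_pow_sub_one (m s : ℕ) (hm : Odd m) (hm0 : 0 < m)
    (hpow : ∃ i : ℕ, (2 : ℤ) ^ i ≡ -1 [ZMOD (m : ℤ)])
    (g : (ZMod 2)[X]) (hg : g.Monic) (hdvd : g ∣ X ^ (m * 2 ^ s) - 1) :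
    g.reverse = g := by
  classical
  have hg0 : g ≠ 0 := hg.ne_zero
  -- X^(m*2^s) - 1 = (X^m - 1)^(2^s)
  have hfact : (X : (ZMod 2)[X]) ^ (m * 2 ^ s) - 1 = ((X : (ZMod 2)[X]) ^ m - 1) ^ (2 ^ s) := by
    haveI : CharP ((ZMod 2)[X]) 2 := Polynomial.instCharP 2
    rw [sub_pow_char_pow, ← pow_mul, one_pow]
  -- every normalized factor of g is self-reciprocal
  have hfactor : ∀ q ∈ UniqueFactorizationMonoid.normalizedFactors g, q.reverse = q := by
    intro q hqmem
    have hqprime : Prime q := UniqueFactorizationMonoid.prime_of_normalized_factor q hqmem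
    have hqnorm : normalize q = q := UniqueFactorizationMonoid.normalize_normalized_factor q hqmem
    have hqmonic : q.Monic := by
      have := Polynomial.monic_normalize (p := q) hqprime.ne_zero
      rwa [hqnorm] at this
    have hqg : q ∣ g := UniqueFactorizationMonoid.dvd_of_mem_normalizedFactors hqmem
    have hqX : q ∣ ((X : (ZMod 2)[X]) ^ m - 1) ^ (2 ^ s) := by
      rw [← hfact]; exact hqg.trans hdvd
    have hqXm : q ∣ (X : (ZMod 2)[X]) ^ m - 1 := hqprime.dvd_of_dvd_pow hqX
    exact irreducible_selfReciprocal m hm0 hpow q hqmonic hqprime.irreducible hqXm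
  -- g is the product of its normalized factors
  have hprod : (UniqueFactorizationMonoid.normalizedFactors g).prod = g := by
    have h := UniqueFactorizationMonoid.prod_normalizedFactors hg0
    have hmonprod : ((UniqueFactorizationMonoid.normalizedFactors g).prod).Monic := by
      have hmon := Polynomial.monic_multiset_prod_of_monic
        (UniqueFactorizationMonoid.normalizedFactors g) id (fun q hqmem => by
          have hqprime : Prime q := UniqueFactorizationMonoid.prime_of_normalized_factor q hqmem
          have hqnorm : normalize q = q :=
            UniqueFactorizationMonoid.normalize_normalized_factor q hqmem
          have := Polynomial.monic_normalize (p := q) hqprime.ne_zero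
          rwa [hqnorm] at this)
      rwa [Multiset.map_id] at hmon
    exact Polynomial.eq_of_monic_of_associated hmonprod hg h
  calc g.reverse = (UniqueFactorizationMonoid.normalizedFactors g).prod.reverse := by rw [hprod]
    _ = ((UniqueFactorizationMonoid.normalizedFactors g).map Polynomial.reverse).prod :=
        reverse_multiset_prod _
    _ = (UniqueFactorizationMonoid.normalizedFactors g).prod := by
        congr 1
        exact Multiset.map_congr rfl (fun q hq => hfactor q hq) |>.trans (Multiset.map_id _)
    _ = g := hprod
end
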